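/- Let λ/μ be a horizontal strip, and let N be a nilpotent endomorphism of F_q^n with conjugated Jordan form partition λ. Then the number of subspaces V ⊆ F_q^n such that N(F_q^n) ⊆ V and the conjugated Jordan form partition of N restricted to V is μ equals ∏_{1 ≤ i < j} q^{(λ_i − μ_i)(μ_j − λ_{j+1})} · ∏_{i ≥ 1} binomial(λ_i − λ_{i+1}, μ_i − λ_{i+1})_q. -/

import Mathlib

open Module LinearMap Submodule
set_option linter.unusedSectionVars false
set_option linter.unusedVariables false
set_option maxHeartbeats 1000000

section Aux
variable {F : Type*} [Field F] [Fintype F]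


theorem aux_finrank_map_add {X Y : Type*} [AddCommGroup X] [Module F X] [FiniteDimensional F X]
    [AddCommGroup Y] [Module F Y] (f : X →ₗ[F] Y) (p : Submodule F X) :
    finrank F (p.map f) + finrank F (p ⊓ ker f : Submodule F X) = finrank F p := by
  have h := LinearMap.finrank_range_add_finrank_ker (f.domRestrict p)
  rw [LinearMap.range_domRestrict] at h
  have hker : ker (f.domRestrict p) ≃ₗ[F] (p ⊓ ker f : Submodule F X) := by
    have : ker (f.domRestrict p) = (p ⊓ ker f : Submodule F X).comap p.subtype := by
      ext x; simp [LinearMap.mem_ker, Submodule.mem_comap]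
    rw [this]
    exact Submodule.comapSubtypeEquivOfLe inf_le_left
  rw [hker.finrank_eq] at h
  exact h

/-- Grassmannian cardinality only depends on the dimension. -/

theorem aux_card_linearMap {V W : Type*} [AddCommGroup V] [Module F V] [FiniteDimensional F V]
    [AddCommGroup W] [Module F W] [FiniteDimensional F W] :
    Nat.card (V →ₗ[F] W) = Fintype.card F ^ (finrank F V * finrank F W) := by
  have e := (LinearMap.toMatrix (finBasis F V) (finBasis F W)).toEquiv
  rw [Nat.card_eq_of_bijective e e.bijective]
  have : Nat.card (Matrix (Fin (finrank F W)) (Fin (finrank F V)) F)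
      = Nat.card (Fin (finrank F W) → Fin (finrank F V) → F) := rfl
  rw [this]
  classical
  simp [Nat.card_eq_fintype_card, Fintype.card_fun, pow_mul, mul_comm]

theorem aux_gr_card {Z : Type*} [AddCommGroup Z] [Module F Z] [FiniteDimensional F Z]
    {k : ℕ} (hk : finrank F Z = k) (c : ℕ) :
    Nat.card {U : Submodule F Z // finrank F U = c}
      = Nat.card {U : Submodule F (Fin k → F) // finrank F U = c} := by
  have e : Z ≃ₗ[F] (Fin k → F) := LinearEquiv.ofFinrankEq _ _ (by simp [hk])
  refine Nat.card_eq_of_bijective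
    (fun U => ⟨(U : Submodule F Z).map (e : Z →ₗ[F] (Fin k → F)), ?_⟩) ?_
  · rw [LinearEquiv.finrank_map_eq e]; exact U.2
  · constructor
    · rintro ⟨U, hU⟩ ⟨U', hU'⟩ h
      simp only [Subtype.mk.injEq] at h ⊢
      exact (Submodule.map_injective_of_injective e.injective) h
    · rintro ⟨W, hW⟩
      refine ⟨⟨W.map (e.symm : (Fin k → F) →ₗ[F] Z), ?_⟩, ?_⟩
      · rw [LinearEquiv.finrank_map_eq e.symm]; exact hW
      · simp only [Subtype.mk.injEq]
        rw [← Submodule.map_comp]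
        simp

theorem aux_compl_count {Z : Type*} [AddCommGroup Z] [Module F Z] [FiniteDimensional F Z]
    (Y : Submodule F Z) (c : ℕ) :
    Nat.card {W : Submodule F Z // W ⊓ Y = ⊥ ∧ finrank F W = c}
      = Fintype.card F ^ (finrank F Y * c)
        * Nat.card {U : Submodule F (Fin (finrank F Z - finrank F Y) → F) //
            finrank F U = c} := by
  classical
  haveI : Finite Z := Module.finite_of_finite F
  obtain ⟨C, h⟩ := Y.exists_isCompl
  have hrkC : finrank F C = finrank F Z - finrank F Y := by
    have := Submodule.finrank_sup_add_finrank_inf_eq Y C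
    rw [h.inf_eq_bot, h.sup_eq_top] at this
    simp only [finrank_bot, finrank_top] at this
    omega
  set prY : Z →ₗ[F] Y := Y.linearProjOfIsCompl C h with hprY
  set prC : Z →ₗ[F] C := C.linearProjOfIsCompl Y h.symm with hprC
  have hsum : ∀ x : Z, (prY x : Z) + (prC x : Z) = x :=
    fun x => Submodule.projection_add_projection_eq_self h x
  have hprYC : ∀ x : Z, x ∈ C → prY x = 0 := fun x hx =>
    Submodule.linearProjOfIsCompl_apply_right' h hx
  have hprCY : ∀ x : Z, x ∈ Y → prC x = 0 := fun x hx =>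
    Submodule.linearProjOfIsCompl_apply_right' h.symm hx
  have hprCC : ∀ x : C, prC (x : Z) = x := fun x =>
    Submodule.linearProjOfIsCompl_apply_left h.symm x
  have hprYY : ∀ x : Y, prY (x : Z) = x := fun x =>
    Submodule.linearProjOfIsCompl_apply_left h x
  let T := Σ U : {U : Submodule F C // finrank F U = c}, (↥(U : Submodule F C) →ₗ[F] Y)
  let g : T → Submodule F Z := fun t =>
    LinearMap.range (C.subtype ∘ₗ (t.1 : Submodule F C).subtype + Y.subtype ∘ₗ t.2)
  have hg_apply : ∀ (t : T) (u : (t.1 : Submodule F C)),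
      (C.subtype ∘ₗ (t.1 : Submodule F C).subtype + Y.subtype ∘ₗ t.2) u
        = ((u : C) : Z) + (t.2 u : Z) := fun t u => rfl
  have hprC_g : ∀ (t : T) (u : (t.1 : Submodule F C)),
      prC (((u : C) : Z) + (t.2 u : Z)) = (u : C) := by
    intro t u
    have h1 : prC ((t.2 u : Y) : Z) = 0 := hprCY _ (t.2 u).2
    rw [map_add, h1, add_zero, hprCC]
  have hprY_g : ∀ (t : T) (u : (t.1 : Submodule F C)),
      prY (((u : C) : Z) + (t.2 u : Z)) = t.2 u := by
    intro t u
    have h1 : prY (((u : C) : C) : Z) = 0 := hprYC _ (u : C).2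
    rw [map_add, h1, zero_add, hprYY]
  have hg_inj : ∀ t : T, Function.Injective
      (C.subtype ∘ₗ (t.1 : Submodule F C).subtype + Y.subtype ∘ₗ t.2) := by
    intro t u v huv
    rw [hg_apply t u, hg_apply t v] at huv
    have h2 := congrArg prC huv
    rw [hprC_g t u, hprC_g t v] at h2
    exact Subtype.ext (Subtype.ext (congrArg Subtype.val h2))
  have hg_mem : ∀ t : T, (g t ⊓ Y = ⊥ ∧ finrank F (g t) = c) := by
    intro t
    constructor
    · rw [eq_bot_iff]
      rintro x ⟨hx1, hx2⟩
      obtain ⟨u, rfl⟩ := hx1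
      rw [hg_apply] at hx2 ⊢
      have h0 : prC (((u : C) : Z) + (t.2 u : Z)) = 0 := hprCY _ hx2
      rw [hprC_g] at h0
      have hu0 : u = 0 := Subtype.ext (Subtype.ext (congrArg Subtype.val h0))
      simp [hu0]
    · rw [LinearMap.finrank_range_of_inj (hg_inj t)]
      exact t.1.2
  have hmapprC : ∀ t : T, Submodule.map prC (g t) = (t.1 : Submodule F C) := by
    intro t
    apply le_antisymm
    · rintro x ⟨z, hz1, rfl⟩
      obtain ⟨u, rfl⟩ := hz1
      rw [hg_apply, hprC_g]
      exact u.2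
    · intro x hx
      refine ⟨((⟨x, hx⟩ : (t.1 : Submodule F C)) : C) + (t.2 ⟨x, hx⟩ : Z), ⟨⟨x, hx⟩, rfl⟩, ?_⟩
      exact hprC_g t ⟨x, hx⟩
  have hbij : Function.Bijective (fun t : T => (⟨g t, hg_mem t⟩ :
      {W : Submodule F Z // W ⊓ Y = ⊥ ∧ finrank F W = c})) := by
    constructor
    · rintro ⟨U₁, f₁⟩ ⟨U₂, f₂⟩ hW
      simp only [Subtype.mk.injEq] at hW
      have hU : U₁ = U₂ := by
        have h1 := hmapprC ⟨U₁, f₁⟩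
        have h2 := hmapprC ⟨U₂, f₂⟩
        apply Subtype.ext
        rw [← h1, ← h2]
        exact congrArg _ hW
      subst hU
      have hf : f₁ = f₂ := by
        ext u
        have hmem : ((u : C) : Z) + (f₁ u : Z) ∈ g ⟨U₁, f₂⟩ := by
          rw [← hW]; exact ⟨u, rfl⟩
        obtain ⟨v, hv⟩ := hmem
        rw [hg_apply] at hv
        have huv : v = u := by
          have h3 := congrArg prC hv
          rw [hprC_g ⟨U₁,f₂⟩ v, hprC_g ⟨U₁,f₁⟩ u] at h3
          exact Subtype.ext (Subtype.ext (congrArg Subtype.val h3))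
        subst huv
        have h4 := congrArg prY hv
        rw [hprY_g ⟨U₁,f₂⟩ v, hprY_g ⟨U₁,f₁⟩ v] at h4
        exact congrArg Subtype.val h4.symm
      rw [hf]
    · rintro ⟨W, hW1, hW2⟩
      set φ : ↥W →ₗ[F] ↥C := prC ∘ₗ W.subtype with hφ
      have hφinj : Function.Injective φ := by
        intro w w' hww
        have hWY : ((w : Z) - (w' : Z)) ∈ W ⊓ Y := by
          constructor
          · exact sub_mem w.2 w'.2
          · have h1 : prC ((w : Z) - (w' : Z)) = 0 := by
              rw [map_sub, show prC (w:Z) = φ w from rfl, show prC (w':Z) = φ w' from rfl,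
                hww, sub_self]
            have h2 := hsum ((w : Z) - (w' : Z))
            rw [h1] at h2
            simp only [ZeroMemClass.coe_zero, add_zero] at h2
            rw [← h2]
            exact (prY _).2
        rw [hW1] at hWY
        exact Subtype.ext (by simpa [sub_eq_zero] using hWY)
      set U : Submodule F C := W.map prC with hU
      have hrangeφ : LinearMap.range φ = U := by
        rw [hφ, LinearMap.range_comp, Submodule.range_subtype, hU]
      have hrkU : finrank F U = c := by
        rw [← hW2, ← hrangeφ, LinearMap.finrank_range_of_inj hφinj]
      let e : ↥W ≃ₗ[F] ↥U := (LinearEquiv.ofInjective φ hφinj).trans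
        (LinearEquiv.ofEq _ _ hrangeφ)
      have he_apply : ∀ w : ↥W, ((e w : C)) = φ w := fun w => rfl
      let f : ↥U →ₗ[F] Y := (prY ∘ₗ W.subtype) ∘ₗ (e.symm : ↥U →ₗ[F] ↥W)
      refine ⟨⟨⟨U, hrkU⟩, f⟩, ?_⟩
      apply Subtype.ext
      apply Submodule.eq_of_le_of_finrank_le
      · rintro x ⟨u, rfl⟩
        rw [hg_apply]
        set w := e.symm u with hw
        have h1 : (u : C) = φ w := by
          rw [hw, ← he_apply (e.symm u), LinearEquiv.apply_symm_apply]
        have h2 : ((u : C) : Z) = (prC ((w : W) : Z) : Z) := congrArg Subtype.val h1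
        have h3 : ((f u : Y) : Z) = (prY ((w : W) : Z) : Z) := rfl
        rw [h2, h3, add_comm, hsum]
        exact w.2
      · rw [hW2, (hg_mem ⟨⟨U, hrkU⟩, f⟩).2]
  have key : Nat.card {W : Submodule F Z // W ⊓ Y = ⊥ ∧ finrank F W = c} = Nat.card T :=
    (Nat.card_eq_of_bijective _ hbij).symm
  rw [key]
  letI : Fintype {U : Submodule F C // finrank F U = c} := Fintype.ofFinite _
  letI : ∀ U : {U : Submodule F C // finrank F U = c},
      Fintype (↥(U : Submodule F C) →ₗ[F] Y) := fun U => by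
    haveI : Finite (↥(U : Submodule F C) →ₗ[F] Y) :=
      Finite.of_injective _ (DFunLike.coe_injective)
    exact Fintype.ofFinite _
  have hT : Nat.card T = ∑ U : {U : Submodule F C // finrank F U = c},
      Nat.card (↥(U : Submodule F C) →ₗ[F] Y) := by
    rw [Nat.card_eq_fintype_card, Fintype.card_sigma]
    simp [Nat.card_eq_fintype_card]
  rw [hT]
  have hcount : ∀ U : {U : Submodule F C // finrank F U = c},
      Nat.card (↥(U : Submodule F C) →ₗ[F] Y) = Fintype.card F ^ (finrank F Y * c) := by
    intro U
    rw [aux_card_linearMap, U.2, mul_comm]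
  rw [Finset.sum_congr rfl (fun U _ => hcount U)]
  rw [Finset.sum_const, Finset.card_univ, smul_eq_mul]
  rw [← Nat.card_eq_fintype_card, aux_gr_card hrkC c, mul_comm]

theorem aux_ext_count {Z : Type*} [AddCommGroup Z] [Module F Z] [FiniteDimensional F Z]
    (Y V' : Submodule F Z) (hV'Y : V' ≤ Y) (m : ℕ) (hm : finrank F V' ≤ m) :
    Nat.card {V : Submodule F Z // V ⊓ Y = V' ∧ finrank F V = m}
      = Fintype.card F ^ ((finrank F Y - finrank F V') * (m - finrank F V'))
        * Nat.card {U : Submodule F (Fin (finrank F Z - finrank F Y) → F) //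
            finrank F U = m - finrank F V'} := by
  classical
  set π := V'.mkQ with hπ
  have hker : ker π = V' := V'.ker_mkQ
  have hrkQ : finrank F (Z ⧸ V') + finrank F V' = finrank F Z :=
    Submodule.finrank_quotient_add_finrank V'
  have hrkY' : finrank F (Y.map π) + finrank F V' = finrank F Y := by
    have := aux_finrank_map_add π Y
    rwa [hker, inf_eq_right.2 hV'Y] at this
  have hYZ : finrank F Y ≤ finrank F Z := Submodule.finrank_le Y
  have hVY : finrank F V' ≤ finrank F Y := Submodule.finrank_mono hV'Y
  -- the bijection, from the quotient side
  have hbij : Function.Bijective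
      (fun (W : {W : Submodule F (Z ⧸ V') // W ⊓ Y.map π = ⊥ ∧
          finrank F W = m - finrank F V'}) =>
        (⟨(W : Submodule F (Z ⧸ V')).comap π, by
          obtain ⟨W, hWY, hWm⟩ := W
          dsimp only
          have hV'c : V' ≤ W.comap π := by
            intro x hx
            simp only [Submodule.mem_comap]
            have : π x = 0 := by rw [← LinearMap.mem_ker, hker]; exact hx
            rw [this]; exact W.zero_mem
          have hmc : (W.comap π).map π = W := by
            rw [Submodule.map_comap_eq, Submodule.range_mkQ, top_inf_eq]
          constructor
          · apply le_antisymm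
            · rintro x ⟨hx1, hx2⟩
              have : π x ∈ W ⊓ Y.map π := ⟨hx1, ⟨x, hx2, rfl⟩⟩
              rw [hWY] at this
              have : x ∈ ker π := this
              rwa [hker] at this
            · exact le_inf hV'c hV'Y
          · have h1 := aux_finrank_map_add π (W.comap π)
            rw [hmc, hker, inf_eq_right.2 hV'c] at h1
            omega⟩ :
        {V : Submodule F Z // V ⊓ Y = V' ∧ finrank F V = m})) := by
    constructor
    · rintro ⟨W₁, h₁⟩ ⟨W₂, h₂⟩ hc
      simp only [Subtype.mk.injEq] at hc ⊢
      have e1 : (W₁.comap π).map π = W₁ := by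
        rw [Submodule.map_comap_eq, Submodule.range_mkQ, top_inf_eq]
      have e2 : (W₂.comap π).map π = W₂ := by
        rw [Submodule.map_comap_eq, Submodule.range_mkQ, top_inf_eq]
      rw [← e1, ← e2, hc]
    · rintro ⟨V, hVY', hVm⟩
      have hV'V : V' ≤ V := hVY' ▸ inf_le_left
      refine ⟨⟨V.map π, ?_, ?_⟩, ?_⟩
      · rw [Submodule.map_inf_eq_map_inf_comap, Submodule.comap_map_eq, hker,
          sup_eq_left.2 hV'Y, hVY']
        rw [eq_bot_iff]
        rintro x ⟨v, hv, rfl⟩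
        simp only [Submodule.mem_bot]
        rw [hπ, Submodule.mkQ_apply, Submodule.Quotient.mk_eq_zero]
        exact hv
      · have h1 := aux_finrank_map_add π V
        rw [hker, inf_eq_right.2 hV'V, hVm] at h1
        omega
      · simp only [Subtype.mk.injEq]
        rw [Submodule.comap_map_mkQ, sup_eq_right.2 hV'V]
  rw [← Nat.card_eq_of_bijective _ hbij]
  rw [aux_compl_count (Y.map π) (m - finrank F V')]
  have h2 : finrank F (Y.map π) = finrank F Y - finrank F V' := by omega
  have h3 : finrank F (Z ⧸ V') - finrank F (Y.map π) = finrank F Z - finrank F Y := by omega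
  rw [h3, h2]

theorem aux_ext_count_rel {Z : Type*} [AddCommGroup Z] [Module F Z] [FiniteDimensional F Z]
    (Z₀ Y V' : Submodule F Z) (hYZ : Y ≤ Z₀) (hV'Y : V' ≤ Y) (m : ℕ)
    (hm : finrank F V' ≤ m) :
    Nat.card {V : Submodule F Z // V ≤ Z₀ ∧ V ⊓ Y = V' ∧ finrank F V = m}
      = Fintype.card F ^ ((finrank F Y - finrank F V') * (m - finrank F V'))
        * Nat.card {U : Submodule F (Fin (finrank F Z₀ - finrank F Y) → F) //
            finrank F U = m - finrank F V'} := by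
  classical
  set Y₀ : Submodule F Z₀ := Y.comap Z₀.subtype with hY₀
  set V'₀ : Submodule F Z₀ := V'.comap Z₀.subtype with hV'₀
  have hV'Z : V' ≤ Z₀ := hV'Y.trans hYZ
  have hmapY : Y₀.map Z₀.subtype = Y := by
    rw [hY₀, Submodule.map_comap_subtype, inf_eq_right.2 hYZ]
  have hmapV' : V'₀.map Z₀.subtype = V' := by
    rw [hV'₀, Submodule.map_comap_subtype, inf_eq_right.2 hV'Z]
  have hrkY : finrank F Y₀ = finrank F Y := by
    rw [← hmapY, Submodule.finrank_map_subtype_eq]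
  have hrkV' : finrank F V'₀ = finrank F V' := by
    rw [← hmapV', Submodule.finrank_map_subtype_eq]
  have hbij : Function.Bijective
      (fun (v : {v : Submodule F Z₀ // v ⊓ Y₀ = V'₀ ∧ finrank F v = m}) =>
        (⟨(v : Submodule F Z₀).map Z₀.subtype, by
          obtain ⟨v, hv1, hv2⟩ := v
          dsimp only
          refine ⟨Submodule.map_subtype_le _ _, ?_, ?_⟩
          · rw [← hmapY, ← Submodule.map_inf _ (Submodule.injective_subtype Z₀), hv1, hmapV']
          · rw [Submodule.finrank_map_subtype_eq]; exact hv2⟩ :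
        {V : Submodule F Z // V ≤ Z₀ ∧ V ⊓ Y = V' ∧ finrank F V = m})) := by
    constructor
    · rintro ⟨v₁, h₁⟩ ⟨v₂, h₂⟩ hc
      simp only [Subtype.mk.injEq] at hc ⊢
      exact Submodule.map_injective_of_injective (Submodule.injective_subtype Z₀) hc
    · rintro ⟨V, hVZ, hVY, hVm⟩
      have hmapV : (V.comap Z₀.subtype).map Z₀.subtype = V := by
        rw [Submodule.map_comap_subtype, inf_eq_right.2 hVZ]
      refine ⟨⟨V.comap Z₀.subtype, ?_, ?_⟩, ?_⟩
      · rw [hY₀, hV'₀, ← Submodule.comap_inf, hVY]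
      · have h5 := Submodule.finrank_map_subtype_eq Z₀ (V.comap Z₀.subtype)
        rw [hmapV] at h5
        omega
      · simp only [Subtype.mk.injEq]
        exact hmapV
  rw [← Nat.card_eq_of_bijective _ hbij]
  rw [aux_ext_count Y₀ V'₀ (by rw [hY₀, hV'₀]; exact Submodule.comap_mono hV'Y) m
    (by rw [hrkV']; exact hm)]
  rw [hrkY, hrkV']

theorem aux_flag_count {Z : Type*} [AddCommGroup Z] [Module F Z] [FiniteDimensional F Z]
    (n : ℕ) (W : ℕ → Submodule F Z) (hmono : Monotone W) (hW0 : W 0 = ⊥)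
    (b : ℕ → ℕ) (hb0 : b 0 = 0) (hbmono : ∀ d, d < n → b d ≤ b (d + 1)) :
    Nat.card {V : Submodule F Z // V ≤ W n ∧
        ∀ d ≤ n, finrank F (V ⊓ W d : Submodule F Z) = b d}
      = ∏ d ∈ Finset.range n,
          (Fintype.card F ^ ((finrank F (W d) - b d) * (b (d + 1) - b d))
            * Nat.card {U : Submodule F (Fin (finrank F (W (d + 1)) - finrank F (W d)) → F) //
                finrank F U = b (d + 1) - b d}) := by
  classical
  haveI : Finite Z := Module.finite_of_finite F
  induction n with
  | zero =>
    rw [Finset.prod_range_zero]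
    rw [Nat.card_eq_one_iff_unique]
    constructor
    · constructor
      rintro ⟨V₁, hV₁, _⟩ ⟨V₂, hV₂, _⟩
      rw [hW0, le_bot_iff] at hV₁ hV₂
      exact Subtype.ext (hV₁.trans hV₂.symm)
    · refine ⟨⟨⊥, bot_le, ?_⟩⟩
      intro d hd
      interval_cases d
      rw [hW0, inf_of_le_left (le_refl _), hb0, finrank_bot]
  | succ n ih =>
    have hbmono' : ∀ d, d < n → b d ≤ b (d + 1) := fun d hd => hbmono d (by omega)
    -- the sigma type
    set B := {V' : Submodule F Z // V' ≤ W n ∧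
        ∀ d ≤ n, finrank F (V' ⊓ W d : Submodule F Z) = b d} with hB
    let Fib : B → Type _ := fun V' => {V : Submodule F Z // V ≤ W (n + 1) ∧
        V ⊓ W n = (V' : Submodule F Z) ∧ finrank F V = b (n + 1)}
    have hbij : Function.Bijective
        (fun (t : Σ V' : B, Fib V') =>
          (⟨(t.2 : Submodule F Z), by
            obtain ⟨V'', V, hVW, hVV', hVm⟩ := t
            dsimp only at *
            refine ⟨hVW, ?_⟩
            intro d hd
            rcases Nat.lt_or_ge d (n + 1) with hdn | hdn
            · have hdn' : d ≤ n := by omega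
              have h1 : V ⊓ W d = (V'' : Submodule F Z) ⊓ W d := by
                rw [← hVV', inf_assoc, inf_eq_right.2 (hmono hdn')]
              rw [h1]
              exact V''.2.2 d hdn'
            · have hdd : d = n + 1 := by omega
              subst hdd
              rw [inf_eq_left.2 hVW, hVm]⟩ :
          {V : Submodule F Z // V ≤ W (n + 1) ∧
            ∀ d ≤ n + 1, finrank F (V ⊓ W d : Submodule F Z) = b d})) := by
      constructor
      · rintro ⟨⟨V'₁, h₁⟩, V₁, hV₁⟩ ⟨⟨V'₂, h₂⟩, V₂, hV₂⟩ hc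
        simp only [Subtype.mk.injEq] at hc
        obtain rfl : V₁ = V₂ := hc
        obtain rfl : V'₁ = V'₂ := hV₁.2.1.symm.trans hV₂.2.1
        rfl
      · rintro ⟨V, hVW, hVd⟩
        refine ⟨⟨⟨V ⊓ W n, inf_le_right, ?_⟩, ⟨V, hVW, rfl, ?_⟩⟩, rfl⟩
        · intro d hd
          rw [inf_assoc, inf_eq_right.2 (hmono hd)]
          exact hVd d (by omega)
        · have := hVd (n + 1) (le_refl _)
          rwa [inf_eq_left.2 hVW] at this
    rw [← Nat.card_eq_of_bijective _ hbij]
    letI : Fintype B := Fintype.ofFinite _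
    letI : ∀ V' : B, Fintype (Fib V') := fun V' => Fintype.ofFinite _
    rw [Nat.card_eq_fintype_card, Fintype.card_sigma]
    have hfib : ∀ V' : B, Fintype.card (Fib V')
        = Fintype.card F ^ ((finrank F (W n) - b n) * (b (n + 1) - b n))
          * Nat.card {U : Submodule F (Fin (finrank F (W (n+1)) - finrank F (W n)) → F) //
              finrank F U = b (n + 1) - b n} := by
      rintro ⟨V', hV'W, hV'd⟩
      have hrkV' : finrank F V' = b n := by
        have := hV'd n (le_refl _)
        rwa [inf_eq_left.2 hV'W] at this
      rw [← Nat.card_eq_fintype_card]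
      have := aux_ext_count_rel (W (n+1)) (W n) V' (hmono (by omega)) hV'W (b (n+1))
        (by rw [hrkV']; exact hbmono n (by omega))
      rw [hrkV'] at this
      exact this
    rw [Finset.sum_congr rfl (fun V' _ => hfib V')]
    rw [Finset.sum_const, Finset.card_univ, smul_eq_mul, ← Nat.card_eq_fintype_card]
    rw [ih hbmono', Finset.prod_range_succ]

end Aux


/-- Let `λ/μ` be a horizontal strip and `N` a nilpotent endomorphism of `F^n`
(`F` the field with `q` elements) with conjugated Jordan form partition `λ`
(i.e. `λ_1 + ... + λ_d = dim ker N^d`).  The number of subspaces `V ⊆ F^n` with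
`N(F^n) ⊆ V` whose restricted conjugated Jordan form partition is `μ`
(i.e. `μ_1 + ... + μ_d = dim ker((N|_V)^d) = dim (V ∩ ker N^d)`) equals
`∏_{i < j} q^{(λ_i − μ_i)(μ_j − λ_{j+1})} · ∏_i [λ_i − λ_{i+1} choose μ_i − λ_{i+1}]_q`,
where the Gaussian binomial `[a choose b]_q` is the number of `b`-dimensional subspaces
of `F^a`.  Parts are 0-indexed. -/
theorem stmt_9 (F : Type*) [Field F] [Fintype F] (n : ℕ) (lam mu : ℕ → ℕ)
    (hlam : ∀ i, lam (i + 1) ≤ lam i) (hsupp : ∀ i, n ≤ i → lam i = 0)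
    (hsum : ∑ i ∈ Finset.range n, lam i = n)
    (hstrip : ∀ i, mu i ≤ lam i ∧ lam (i + 1) ≤ mu i)
    (N : (Fin n → F) →ₗ[F] (Fin n → F)) (hNnil : IsNilpotent N)
    (hJF : ∀ d : ℕ, ∑ r ∈ Finset.range d, lam r
      = Module.finrank F (LinearMap.ker (N ^ d))) :
    Nat.card {V : Submodule F (Fin n → F) // LinearMap.range N ≤ V ∧
        ∀ d : ℕ, ∑ r ∈ Finset.range d, mu r
          = Module.finrank F ((V ⊓ LinearMap.ker (N ^ d) : Submodule F (Fin n → F)))}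
      = (∏ j ∈ Finset.range n, ∏ i ∈ Finset.range j,
          Fintype.card F ^ ((lam i - mu i) * (mu j - lam (j + 1))))
        * ∏ i ∈ Finset.range n, Nat.card {U : Submodule F (Fin (lam i - lam (i + 1)) → F) //
            Module.finrank F U = mu i - lam (i + 1)} := by
  classical
  set X := Fin n → F with hX
  set R : Submodule F X := LinearMap.range N with hR
  set K : ℕ → Submodule F X := fun d => LinearMap.ker (N ^ d) with hKdef
  set Lam : ℕ → ℕ := fun d => ∑ r ∈ Finset.range d, lam r with hLam
  set M : ℕ → ℕ := fun d => ∑ r ∈ Finset.range d, mu r with hM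
  have hlam_anti : ∀ i j, i ≤ j → lam j ≤ lam i := fun i j h =>
    (antitone_nat_of_succ_le hlam) h
  have hmu0 : ∀ r, n ≤ r → mu r = 0 := fun r hr =>
    Nat.le_antisymm ((hstrip r).1.trans_eq (hsupp r hr)) (Nat.zero_le _)
  have hK : ∀ d, finrank F (K d) = Lam d := fun d => (hJF d).symm
  have hKmono : Monotone K := by
    intro a c hac x hx
    show (N ^ c) x = 0
    have hx' : (N ^ a) x = 0 := hx
    have hpow : N ^ c = N ^ (c - a) * N ^ a := by rw [← pow_add]; congr 1; omega
    rw [hpow, Module.End.mul_apply, hx', map_zero]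
  have hfinX : finrank F X = n := Module.finrank_fin_fun F
  have hLamn : ∀ d, n ≤ d → Lam d = n := by
    intro d hd
    show (∑ r ∈ Finset.range d, lam r) = n
    rw [← Finset.sum_subset (Finset.range_subset_range.2 hd)
      (fun x _ hx => hsupp x (by simpa using hx))]
    exact hsum
  have hMn : ∀ d, n ≤ d → M d = M n := fun d hd =>
    (Finset.sum_subset (Finset.range_subset_range.2 hd)
      (fun x _ hx => hmu0 x (by simpa using hx))).symm
  have hKtop : ∀ d, n ≤ d → K d = ⊤ := by
    intro d hd
    apply Submodule.eq_top_of_finrank_eq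
    rw [hK, hLamn d hd, hfinX]
  have hK0 : K 0 = ⊥ := by
    show LinearMap.ker (N ^ 0) = ⊥
    rw [pow_zero, Module.End.one_eq_id, LinearMap.ker_id]
  have hlam0 : lam 0 = finrank F (LinearMap.ker N) := by
    have := hJF 1
    rw [pow_one] at this
    simpa using this
  have hrkR : finrank F R + lam 0 = n := by
    show finrank F (LinearMap.range N) + lam 0 = n
    have h1 := LinearMap.finrank_range_add_finrank_ker N
    have h2 : finrank F (Fin n → F) = n := Module.finrank_fin_fun F
    omega
  have hkerK1 : LinearMap.ker N = K 1 := by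
    show LinearMap.ker N = LinearMap.ker (N ^ 1)
    rw [pow_one]
  have hRK : ∀ d, R ⊓ K d = (K (d + 1)).map N := by
    intro d
    apply le_antisymm
    · rintro x ⟨⟨y, rfl⟩, hx2⟩
      refine ⟨y, ?_, rfl⟩
      show (N ^ (d + 1)) y = 0
      have hx2' : (N ^ d) (N y) = 0 := hx2
      rw [pow_succ, Module.End.mul_apply]
      exact hx2'
    · rintro x ⟨y, hy, rfl⟩
      refine ⟨⟨y, rfl⟩, ?_⟩
      show (N ^ d) (N y) = 0
      have hy' : (N ^ (d + 1)) y = 0 := hy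
      rw [← Module.End.mul_apply, ← pow_succ]
      exact hy'
  have hRK_rank : ∀ d, finrank F (R ⊓ K d : Submodule F X) + lam 0 = Lam (d + 1) := by
    intro d
    have h1 := aux_finrank_map_add N (K (d + 1))
    have h2 : K (d + 1) ⊓ LinearMap.ker N = LinearMap.ker N := by
      rw [inf_eq_right, hkerK1]
      exact hKmono (by omega)
    rw [h2, ← hlam0, hK, ← hRK d] at h1
    exact h1
  -- quotient setup
  set Q := X ⧸ R with hQ
  set π : X →ₗ[F] Q := R.mkQ with hπ
  have hkerπ : LinearMap.ker π = R := R.ker_mkQ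
  set Wq : ℕ → Submodule F Q := fun d => (K d).map π with hWq
  have hWqmono : Monotone Wq := fun a c h => Submodule.map_mono (hKmono h)
  have hWq0 : Wq 0 = ⊥ := by rw [hWq]; simp only [hK0, Submodule.map_bot]
  have hWqtop : Wq n = ⊤ := by
    show (K n).map π = ⊤
    rw [hKtop n le_rfl, Submodule.map_top]
    exact R.range_mkQ
  have hWq_rank : ∀ d, finrank F (Wq d) + Lam (d + 1) = Lam d + lam 0 := by
    intro d
    have h1 : finrank F (Wq d) + finrank F (K d ⊓ R : Submodule F X) = Lam d := by
      have h0 := aux_finrank_map_add π (K d)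
      rw [hkerπ, hK] at h0
      exact h0
    have h2 : K d ⊓ R = R ⊓ K d := inf_comm _ _
    rw [h2] at h1
    have h3 := hRK_rank d
    omega
  -- numeric b
  set b : ℕ → ℕ := fun d => lam 0 + M d - Lam (d + 1) with hb
  have hLamsucc : ∀ d, Lam (d + 1) = Lam d + lam d := fun d => Finset.sum_range_succ lam d
  have hMsucc : ∀ d, M (d + 1) = M d + mu d := fun d => Finset.sum_range_succ mu d
  have hLamshift : ∀ d, Lam (d + 1) = (∑ r ∈ Finset.range d, lam (r + 1)) + lam 0 :=
    fun d => Finset.sum_range_succ' lam d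
  have hMge : ∀ d, (∑ r ∈ Finset.range d, lam (r + 1)) ≤ M d :=
    fun d => Finset.sum_le_sum (fun i _ => (hstrip i).2)
  have hbLam : ∀ d, b d + Lam (d + 1) = lam 0 + M d := by
    intro d
    have h1 := hLamshift d
    have h2 := hMge d
    show lam 0 + M d - Lam (d + 1) + Lam (d + 1) = lam 0 + M d
    omega
  have hMLam : ∀ d, M d ≤ Lam d :=
    fun d => Finset.sum_le_sum (fun i _ => (hstrip i).1)
  have hb0 : b 0 = 0 := by
    have := hbLam 0
    norm_num at this
    have h1 : Lam 1 = lam 0 := Finset.sum_range_one lam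
    have h2 : M 0 = 0 := Finset.sum_range_zero mu
    omega
  have hbmono : ∀ d, d < n → b d ≤ b (d + 1) := by
    intro d _
    have h1 := hbLam d
    have h2 := hbLam (d + 1)
    have h3 := hLamsucc (d + 1)
    have h4 := hMsucc d
    have h5 := (hstrip d).2
    omega
  -- key rank identity
  have hkey : ∀ (v : Submodule F Q) (d : ℕ),
      finrank F ((v.comap π ⊓ K d : Submodule F X))
        = finrank F (v ⊓ Wq d : Submodule F Q) + finrank F (R ⊓ K d : Submodule F X) := by
    intro v d
    set V : Submodule F X := v.comap π with hV
    have hRV : R ≤ V := by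
      intro x hx
      have : π x = 0 := by rw [← LinearMap.mem_ker, hkerπ]; exact hx
      simp only [hV, Submodule.mem_comap, this]
      exact v.zero_mem
    have h1 : V.map π = v := by
      rw [hV, Submodule.map_comap_eq, Submodule.range_mkQ, top_inf_eq]
    have h2 : v ⊓ Wq d = (V ⊓ (K d ⊔ R)).map π := by
      rw [← h1, hWq]
      rw [Submodule.map_inf_eq_map_inf_comap, Submodule.comap_map_eq, hkerπ]
    have h3 := aux_finrank_map_add π (V ⊓ (K d ⊔ R))
    rw [hkerπ] at h3
    have h4 : (V ⊓ (K d ⊔ R)) ⊓ R = R := by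
      rw [inf_eq_right]
      exact le_inf hRV le_sup_right
    have h5 : V ⊓ (K d ⊔ R) = R ⊔ (K d ⊓ V) := by
      rw [inf_comm, sup_comm, sup_inf_assoc_of_le _ hRV]
    have h6 := Submodule.finrank_sup_add_finrank_inf_eq R (K d ⊓ V)
    have h7 : R ⊓ (K d ⊓ V) = R ⊓ K d := by
      apply le_antisymm
      · exact le_inf inf_le_left (inf_le_right.trans inf_le_left)
      · exact le_inf inf_le_left (le_inf inf_le_right (inf_le_left.trans hRV))
    have h8 : V ⊓ K d = K d ⊓ V := inf_comm _ _
    rw [h4, h5] at h3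
    rw [h7] at h6
    rw [h8, h2, h5]
    omega
  -- main bijection
  have hbij : Function.Bijective
      (fun (v : {v : Submodule F Q // v ≤ Wq n ∧
          ∀ d ≤ n, finrank F (v ⊓ Wq d : Submodule F Q) = b d}) =>
        (⟨(v : Submodule F Q).comap π, by
          obtain ⟨v, hvW, hvd⟩ := v
          dsimp only
          have hRV : R ≤ v.comap π := by
            intro x hx
            have : π x = 0 := by rw [← LinearMap.mem_ker, hkerπ]; exact hx
            simp only [Submodule.mem_comap, this]
            exact v.zero_mem
          refine ⟨hRV, ?_⟩
          have hVd : ∀ d ≤ n, M d = finrank F (v.comap π ⊓ K d : Submodule F X) := by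
            intro d hd
            have h1 := hkey v d
            have h2 := hvd d hd
            have h3 := hRK_rank d
            have h4 := hbLam d
            omega
          intro d
          rcases le_or_gt d n with hd | hd
          · exact hVd d hd
          · have hKd : K d = K n := by rw [hKtop d (by omega), hKtop n le_rfl]
            have e : (v.comap π ⊓ K d : Submodule F X) = (v.comap π ⊓ K n : Submodule F X) := by
              rw [hKd]
            show M d = finrank F (v.comap π ⊓ K d : Submodule F X)
            rw [e, hMn d (by omega)]
            exact hVd n le_rfl⟩ :
        {V : Submodule F X // R ≤ V ∧
          ∀ d : ℕ, ∑ r ∈ Finset.range d, mu r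
            = finrank F ((V ⊓ LinearMap.ker (N ^ d) : Submodule F X))})) := by
    constructor
    · rintro ⟨v₁, h₁⟩ ⟨v₂, h₂⟩ hc
      simp only [Subtype.mk.injEq] at hc ⊢
      have e1 : (v₁.comap π).map π = v₁ := by
        rw [Submodule.map_comap_eq, Submodule.range_mkQ, top_inf_eq]
      have e2 : (v₂.comap π).map π = v₂ := by
        rw [Submodule.map_comap_eq, Submodule.range_mkQ, top_inf_eq]
      rw [← e1, ← e2, hc]
    · rintro ⟨V, hRV, hVd⟩
      have hcm : (V.map π).comap π = V := by
        rw [Submodule.comap_map_mkQ, sup_eq_right.2 hRV]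
      refine ⟨⟨V.map π, ?_, ?_⟩, ?_⟩
      · rw [hWqtop]; exact le_top
      · intro d hd
        have h1 := hkey (V.map π) d
        rw [hcm] at h1
        have h2 : M d = finrank F (V ⊓ K d : Submodule F X) := hVd d
        have h3 := hRK_rank d
        have h4 := hbLam d
        have h5 := hMLam d
        omega
      · simp only [Subtype.mk.injEq]
        exact hcm
  refine ((Nat.card_eq_of_bijective _ hbij).symm.trans ?_)
  rw [aux_flag_count n Wq hWqmono hWq0 b hb0 hbmono]
  -- numeric assembly
  have hfactor : ∀ d ∈ Finset.range n,
      (Fintype.card F ^ ((finrank F (Wq d) - b d) * (b (d + 1) - b d))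
        * Nat.card {U : Submodule F (Fin (finrank F (Wq (d + 1)) - finrank F (Wq d)) → F) //
            finrank F U = b (d + 1) - b d})
      = (∏ i ∈ Finset.range d,
          Fintype.card F ^ ((lam i - mu i) * (mu d - lam (d + 1))))
        * Nat.card {U : Submodule F (Fin (lam d - lam (d + 1)) → F) //
            finrank F U = mu d - lam (d + 1)} := by
    intro d _
    have hWd := hWq_rank d
    have hWd1 := hWq_rank (d + 1)
    have hbd := hbLam d
    have hbd1 := hbLam (d + 1)
    have hLs := hLamsucc d
    have hLs1 := hLamsucc (d + 1)
    have hMs := hMsucc d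
    have hML := hMLam d
    have hsd := (hstrip d).2
    have hld := hlam d
    have hB : b (d + 1) - b d = mu d - lam (d + 1) := by omega
    have hC : finrank F (Wq (d + 1)) - finrank F (Wq d) = lam d - lam (d + 1) := by
      have h1 : lam (d + 1) ≤ lam d := hlam d
      omega
    have hA : finrank F (Wq d) - b d = Lam d - M d := by omega
    rw [hB, hC, hA]
    congr 1
    rw [Finset.prod_pow_eq_pow_sum]
    congr 1
    rw [← Finset.sum_mul]
    congr 1
    rw [← Finset.sum_tsub_distrib _ (fun i _ => (hstrip i).1)]
  rw [Finset.prod_congr rfl hfactor]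
  rw [Finset.prod_mul_distrib]
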